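/- arXiv:1711.00091 — 6 statements merged into one kernel-verified Lean document; each statement's English description precedes it below -/
import Mathlib

section
/- Let $W$ be a Bessel fusion sequence with bound $B_W$ and $V$ a fusion frame with bounds $A_V\le B_V$ in $\mathcal{H}$, and $U\in B(\mathcal{H})$. Then the $U$-fusion cross Gram matrix $\mathcal{G}_{U,W,V} = \phi_{WV}T_V^*UT_W$ is a well-defined bounded operator on $(\sum_{i\in I}\oplus W_i)_{\ell^2}$ with $\|\mathcal{G}_{U,W,V}\| \le \frac{\sqrt{B_W B_V}}{A_V}\|U\|$. -/
open scoped InnerProductSpace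
open ContinuousLinearMap (adjoint)
set_option maxHeartbeats 1000000
set_option synthInstance.maxHeartbeats 400000
noncomputable section

variable {H : Type*} [NormedAddCommGroup H] [InnerProductSpace ℂ H] [CompleteSpace H]
variable {ι : Type*} [Countable ι]

/-- The orthogonal projection onto a closed subspace, as an endomorphism of `H`. -/
noncomputable def projL (W : Submodule ℂ H) [CompleteSpace W] : H →L[ℂ] H :=
  W.subtypeL.comp (Submodule.orthogonalProjectionOnto W)

/-- `{(W i, ω i)}` is a fusion frame with bounds `A ≤ B`. -/
def IsFusionFrame (W : ι → Submodule ℂ H) [∀ i, CompleteSpace (W i)]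
    (ω : ι → ℝ) (A B : ℝ) : Prop :=
  ∀ f : H, ∃ s : ℝ,
    HasSum (fun i => (ω i) ^ 2 * ‖(Submodule.orthogonalProjectionOnto (W i) f : H)‖ ^ 2) s ∧
    A * ‖f‖ ^ 2 ≤ s ∧ s ≤ B * ‖f‖ ^ 2

/-- `{(W i, ω i)}` is a Bessel fusion sequence with bound `B`. -/
def IsBesselFusion (W : ι → Submodule ℂ H) [∀ i, CompleteSpace (W i)]
    (ω : ι → ℝ) (B : ℝ) : Prop :=
  ∀ f : H, ∃ s : ℝ,
    HasSum (fun i => (ω i) ^ 2 * ‖(Submodule.orthogonalProjectionOnto (W i) f : H)‖ ^ 2) s ∧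
    s ≤ B * ‖f‖ ^ 2

/-- `{(W i, ω i)}` is a fusion Riesz basis with bounds `C ≤ D`. -/
def IsFusionRieszBasisWith (W : ι → Submodule ℂ H) (ω : ι → ℝ) (C D : ℝ) : Prop :=
  (⨆ i, W i).topologicalClosure = ⊤ ∧ 0 < C ∧ C ≤ D ∧
  ∀ (J : Finset ι) (g : ∀ i, W i),
    C * ∑ j ∈ J, ‖(g j : H)‖ ^ 2 ≤ ‖∑ j ∈ J, ω j • ((g j : H))‖ ^ 2 ∧
    ‖∑ j ∈ J, ω j • ((g j : H))‖ ^ 2 ≤ D * ∑ j ∈ J, ‖(g j : H)‖ ^ 2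

/-- `{(W i, ω i)}` is a fusion Riesz basis. -/
def IsFusionRieszBasis (W : ι → Submodule ℂ H) (ω : ι → ℝ) : Prop :=
  ∃ C D : ℝ, IsFusionRieszBasisWith W ω C D

private lemma le_sqrt_of_sq_le {x c : ℝ} (hx : 0 ≤ x) (h : x ^ 2 ≤ c) :
    x ≤ Real.sqrt c := by
  have := Real.sqrt_le_sqrt h
  rwa [Real.sqrt_sq hx] at this

private lemma lp_hasSum_sq (W : ι → Submodule ℂ H) [∀ i, CompleteSpace (W i)]
    (x : lp (fun i => ↥(W i)) 2) :
    HasSum (fun i => ‖x i‖ ^ 2) (‖x‖ ^ 2) := by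
  have h := lp.hasSum_norm (p := 2) (by norm_num) x
  simpa [Real.rpow_two] using h

/-- The synthesis operator of a Bessel fusion sequence has norm at most `√B`. -/
private lemma synth_norm_le (W : ι → Submodule ℂ H) [∀ i, CompleteSpace (W i)]
    (ω : ι → ℝ) (B : ℝ) (hB : 0 ≤ B)
    (hBessel : IsBesselFusion W ω B)
    (T : lp (fun i => ↥(W i)) 2 →L[ℂ] H)
    (hT : ∀ f, HasSum (fun i => ω i • ((f i : H))) (T f)) :
    ‖T‖ ≤ Real.sqrt B := by
  have hnorm : ‖adjoint T‖ = ‖T‖ := LinearIsometryEquiv.norm_map _ T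
  rw [← hnorm]
  refine ContinuousLinearMap.opNorm_le_bound _ (Real.sqrt_nonneg B) fun g => ?_
  obtain ⟨s, hs, hsB⟩ := hBessel g
  set e : ∀ i, ↥(W i) := fun i => (ω i : ℝ) • (Submodule.orthogonalProjectionOnto (W i) g) with he
  have hnormsq : ∀ i, ‖e i‖ ^ 2 = ω i ^ 2 * ‖(Submodule.orthogonalProjectionOnto (W i) g : H)‖ ^ 2 := by
    intro i
    have h1 : ‖e i‖ = |ω i| * ‖(Submodule.orthogonalProjectionOnto (W i) g : H)‖ := by
      show ‖ω i • Submodule.orthogonalProjectionOnto (W i) g‖ = _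
      rw [norm_smul, Real.norm_eq_abs]
      rfl
    rw [h1, mul_pow, sq_abs]
  have hmem : Memℓp e 2 := by
    apply memℓp_gen
    have h2 : (fun i => ‖e i‖ ^ (2 : ENNReal).toReal)
        = fun i => ω i ^ 2 * ‖(Submodule.orthogonalProjectionOnto (W i) g : H)‖ ^ 2 := by
      funext i
      rw [show ((2 : ENNReal).toReal) = (2 : ℝ) by norm_num, Real.rpow_two, hnormsq]
    rw [h2]
    exact hs.summable
  set x : ↥(lp (fun i => ↥(W i)) 2) := ⟨e, hmem⟩ with hxdef
  have hx : adjoint T g = x := by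
    refine ext_inner_right ℂ fun f => ?_
    rw [ContinuousLinearMap.adjoint_inner_left]
    have h1 : HasSum (fun i => (⟪g, ω i • ((f i : H))⟫_ℂ)) ⟪g, T f⟫_ℂ :=
      (hT f).mapL (innerSL ℂ g)
    have h2 : HasSum (fun i => ⟪x i, f i⟫_ℂ) ⟪x, f⟫_ℂ := lp.hasSum_inner x f
    have hfun : ∀ i, ⟪x i, f i⟫_ℂ = ⟪g, ω i • ((f i : H))⟫_ℂ := by
      intro i
      show ⟪(ω i • Submodule.orthogonalProjectionOnto (W i) g : ↥(W i)), f i⟫_ℂ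
          = ⟪g, ω i • ((f i : H))⟫_ℂ
      rw [RCLike.real_smul_eq_coe_smul (K := ℂ) (ω i) ((f i : H)),
        RCLike.real_smul_eq_coe_smul (K := ℂ) (ω i) (Submodule.orthogonalProjectionOnto (W i) g),
        inner_smul_real_left, inner_smul_real_right]
      have h4 : ⟪Submodule.orthogonalProjectionOnto (W i) g, f i⟫_ℂ = ⟪g, ((f i : H))⟫_ℂ :=
        Submodule.inner_orthogonalProjectionOnto_eq_of_mem_right (K := W i) (f i) g
      rw [h4]
    have h2' : HasSum (fun i => ⟪g, ω i • ((f i : H))⟫_ℂ) ⟪x, f⟫_ℂ := by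
      rwa [funext hfun] at h2
    exact (h2'.unique h1).symm
  rw [hx]
  have hns := lp_hasSum_sq W x
  have hns' : HasSum (fun i => ω i ^ 2 * ‖(Submodule.orthogonalProjectionOnto (W i) g : H)‖ ^ 2)
      (‖x‖ ^ 2) := by
    have hxi : ∀ i, ‖x i‖ ^ 2 = ω i ^ 2 * ‖(Submodule.orthogonalProjectionOnto (W i) g : H)‖ ^ 2 :=
      fun i => hnormsq i
    rwa [funext hxi] at hns
  have hxs : ‖x‖ ^ 2 = s := hns'.unique hs
  have : ‖x‖ ≤ Real.sqrt (B * ‖g‖ ^ 2) :=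
    le_sqrt_of_sq_le (norm_nonneg _) (by rw [hxs]; exact hsB)
  rwa [Real.sqrt_mul hB, Real.sqrt_sq (norm_nonneg g)] at this

/-- the `U`-fusion cross Gram matrix `𝒢_{U,W,V} = φ_{WV} T_V^* U T_W` is a
bounded operator on `(∑ᵢ ⊕ Wᵢ)_{ℓ²}` with `‖𝒢_{U,W,V}‖ ≤ √(B_W B_V)/A_V · ‖U‖`. -/
theorem stmt9 (W V : ι → Submodule ℂ H)
    [∀ i, CompleteSpace (W i)] [∀ i, CompleteSpace (V i)]
    (ω v : ι → ℝ) (hω : ∀ i, 0 < ω i) (hv : ∀ i, 0 < v i)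
    (BW AV BV : ℝ) (hBW : 0 < BW) (hAV : 0 < AV) (hAVBV : AV ≤ BV)
    (hBessel : IsBesselFusion W ω BW)
    (hframeV : IsFusionFrame V v AV BV)
    (U : H →L[ℂ] H)
    (TW : lp (fun i => ↥(W i)) 2 →L[ℂ] H)
    (hTW : ∀ f, HasSum (fun i => ω i • ((f i : H))) (TW f))
    (TV : lp (fun i => ↥(V i)) 2 →L[ℂ] H)
    (hTV : ∀ f, HasSum (fun i => v i • ((f i : H))) (TV f))
    (SV SVinv : H →L[ℂ] H)
    (hSV : ∀ f, HasSum (fun i => (v i) ^ 2 • ((Submodule.orthogonalProjectionOnto (V i) f : H))) (SV f))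
    (hSVinv : SV.comp SVinv = 1 ∧ SVinv.comp SV = 1)
    (φ : lp (fun i => ↥(V i)) 2 →L[ℂ] lp (fun i => ↥(W i)) 2)
    (hφ : ∀ f i, ((φ f) i : H) = (Submodule.orthogonalProjectionOnto (W i) (SVinv ((f i : H))) : H)) :
    ‖φ ∘L (adjoint TV) ∘L U ∘L TW‖ ≤ Real.sqrt (BW * BV) / AV * ‖U‖ := by
  have hBV : (0:ℝ) < BV := lt_of_lt_of_le hAV hAVBV
  have hTWn : ‖TW‖ ≤ Real.sqrt BW := synth_norm_le W ω BW hBW.le hBessel TW hTW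
  have hBesselV : IsBesselFusion V v BV := fun f => by
    obtain ⟨s, h1, _, h3⟩ := hframeV f; exact ⟨s, h1, h3⟩
  have hTVn : ‖TV‖ ≤ Real.sqrt BV := synth_norm_le V v BV hBV.le hBesselV TV hTV
  have hadj : ‖adjoint TV‖ = ‖TV‖ := LinearIsometryEquiv.norm_map _ TV
  -- bound on the inverse frame operator
  have hSinv : ∀ x : H, ‖SVinv x‖ ≤ (1 / AV) * ‖x‖ := by
    intro x
    set g : H := SVinv x with hg
    obtain ⟨s, hs, hl, _⟩ := hframeV g
    have hSVg : HasSum (fun i => (v i) ^ 2 • ((Submodule.orthogonalProjectionOnto (V i) g : H))) (SV g) :=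
      hSV g
    have h1 : HasSum (fun i => ⟪g, (v i) ^ 2 • ((Submodule.orthogonalProjectionOnto (V i) g : H))⟫_ℂ)
        ⟪g, SV g⟫_ℂ := hSVg.mapL (innerSL ℂ g)
    have hterm : ∀ i, ⟪g, (v i) ^ 2 • ((Submodule.orthogonalProjectionOnto (V i) g : H))⟫_ℂ
        = (((v i) ^ 2 * ‖(Submodule.orthogonalProjectionOnto (V i) g : H)‖ ^ 2 : ℝ) : ℂ) := by
      intro i
      have key : ⟪g, ((Submodule.orthogonalProjectionOnto (V i) g : H))⟫_ℂ
          = ((‖(Submodule.orthogonalProjectionOnto (V i) g : H)‖ ^ 2 : ℝ) : ℂ) := by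
        have h3 := Submodule.inner_starProjection_left_eq_right (V i) g
          ((Submodule.orthogonalProjectionOnto (V i) g : H))
        rw [Submodule.starProjection_apply, Submodule.starProjection_apply,
          Submodule.orthogonalProjectionOnto_mem_subspace_eq_self] at h3
        rw [← h3, inner_self_eq_norm_sq_to_K]
        norm_num
      rw [RCLike.real_smul_eq_coe_smul (K := ℂ) ((v i) ^ 2), inner_smul_right, key]
      norm_num
    have hofReal : HasSum
        (fun i => (((v i) ^ 2 * ‖(Submodule.orthogonalProjectionOnto (V i) g : H)‖ ^ 2 : ℝ) : ℂ))
        ((s : ℝ) : ℂ) := hs.mapL Complex.ofRealCLM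
    have h1' : HasSum
        (fun i => (((v i) ^ 2 * ‖(Submodule.orthogonalProjectionOnto (V i) g : H)‖ ^ 2 : ℝ) : ℂ))
        ⟪g, SV g⟫_ℂ := by rwa [funext hterm] at h1
    have hgs : ⟪g, SV g⟫_ℂ = ((s : ℝ) : ℂ) := h1'.unique hofReal
    have hSVgx : SV g = x := by
      have := ContinuousLinearMap.ext_iff.mp hSVinv.1 x
      simpa using this
    have hre : s ≤ ‖g‖ * ‖x‖ := by
      have h5 : ‖⟪g, SV g⟫_ℂ‖ ≤ ‖g‖ * ‖SV g‖ := norm_inner_le_norm g (SV g)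
      rw [hgs, hSVgx] at h5
      calc s ≤ |s| := le_abs_self s
        _ = ‖((s : ℝ) : ℂ)‖ := by simp
        _ ≤ ‖g‖ * ‖x‖ := h5
    have hkey : AV * ‖g‖ ^ 2 ≤ ‖g‖ * ‖x‖ := le_trans hl hre
    rcases eq_or_lt_of_le (norm_nonneg g) with h0 | h0
    · rw [← h0]; positivity
    · have h1 : AV * ‖g‖ ≤ ‖x‖ := by nlinarith
      have h2 := mul_le_mul_of_nonneg_left h1 (by positivity : (0:ℝ) ≤ 1 / AV)
      have h3 : 1 / AV * (AV * ‖g‖) = ‖g‖ := by field_simp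
      linarith
  -- bound on φ
  have hφn : ‖φ‖ ≤ 1 / AV := by
    refine ContinuousLinearMap.opNorm_le_bound _ (by positivity) fun f => ?_
    have hA := lp_hasSum_sq W (φ f)
    have hB := lp_hasSum_sq V f
    have hterm : ∀ i, ‖(φ f) i‖ ^ 2 ≤ (1 / AV) ^ 2 * ‖f i‖ ^ 2 := by
      intro i
      have h1 : ‖((φ f) i : H)‖ ≤ (1 / AV) * ‖(f i : H)‖ := by
        rw [hφ f i]
        calc ‖(Submodule.orthogonalProjectionOnto (W i) (SVinv ((f i : H))) : H)‖
            ≤ ‖SVinv ((f i : H))‖ := by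
              have h2 := (Submodule.orthogonalProjectionOnto (W i)).le_opNorm (SVinv ((f i : H)))
              have h3 : ‖(Submodule.orthogonalProjectionOnto (W i))‖ ≤ 1 := Submodule.orthogonalProjectionOnto_norm_le _
              calc ‖(Submodule.orthogonalProjectionOnto (W i) (SVinv ((f i : H))) : H)‖
                  = ‖Submodule.orthogonalProjectionOnto (W i) (SVinv ((f i : H)))‖ := rfl
                _ ≤ ‖(Submodule.orthogonalProjectionOnto (W i))‖ * ‖SVinv ((f i : H))‖ := h2
                _ ≤ 1 * ‖SVinv ((f i : H))‖ := by
                    exact mul_le_mul_of_nonneg_right h3 (norm_nonneg _)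
                _ = ‖SVinv ((f i : H))‖ := one_mul _
          _ ≤ (1 / AV) * ‖(f i : H)‖ := hSinv _
      have hc : ‖(φ f) i‖ = ‖((φ f) i : H)‖ := rfl
      have hc2 : ‖f i‖ = ‖(f i : H)‖ := rfl
      rw [hc, hc2, ← mul_pow]
      exact pow_le_pow_left₀ (norm_nonneg _) h1 2
    have hsum : HasSum (fun i => (1 / AV) ^ 2 * ‖f i‖ ^ 2) ((1 / AV) ^ 2 * ‖f‖ ^ 2) :=
      hB.mul_left _
    have hle : ‖φ f‖ ^ 2 ≤ (1 / AV) ^ 2 * ‖f‖ ^ 2 := hasSum_le hterm hA hsum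
    have := le_sqrt_of_sq_le (norm_nonneg _) hle
    rwa [← mul_pow, Real.sqrt_sq (by positivity)] at this
  -- assemble
  have c1 : ‖U ∘L TW‖ ≤ ‖U‖ * Real.sqrt BW :=
    le_trans (ContinuousLinearMap.opNorm_comp_le _ _)
      (mul_le_mul_of_nonneg_left hTWn (norm_nonneg U))
  have c2 : ‖(adjoint TV) ∘L U ∘L TW‖ ≤ Real.sqrt BV * (‖U‖ * Real.sqrt BW) :=
    le_trans (ContinuousLinearMap.opNorm_comp_le _ _)
      (mul_le_mul (hadj ▸ hTVn) c1 (norm_nonneg _) (Real.sqrt_nonneg _))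
  have c3 : ‖φ ∘L (adjoint TV) ∘L U ∘L TW‖
      ≤ (1 / AV) * (Real.sqrt BV * (‖U‖ * Real.sqrt BW)) :=
    le_trans (ContinuousLinearMap.opNorm_comp_le _ _)
      (mul_le_mul hφn c2 (norm_nonneg _) (by positivity))
  calc ‖φ ∘L (adjoint TV) ∘L U ∘L TW‖
      ≤ (1 / AV) * (Real.sqrt BV * (‖U‖ * Real.sqrt BW)) := c3
    _ = Real.sqrt (BW * BV) / AV * ‖U‖ := by
        rw [Real.sqrt_mul hBW.le]
        ring
end
end

section
/- Let $V$ be a dual fusion frame of $W$ (i.e., $T_V\phi_{VW}T_W^* = I_{\mathcal{H}}$) and $W$ a dual of $V$. Then for every $U\in B(\mathcal{H})$ one can recover $U$ from its fusion Gram matrix: $T_W\,\mathcal{G}_{U,W,V}\,T_W^* S_W^{-1} = U$, where $\mathcal{G}_{U,W,V} = \phi_{WV}T_V^*UT_W$. -/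
open scoped InnerProductSpace
open ContinuousLinearMap (adjoint)
set_option maxHeartbeats 1000000
set_option synthInstance.maxHeartbeats 400000
noncomputable section

variable {H : Type*} [NormedAddCommGroup H] [InnerProductSpace ℂ H] [CompleteSpace H]
variable {ι : Type*} [Countable ι]

/-- if `V` and `W` are mutually dual fusion frames, then any `U ∈ B(H)` is
recovered from its Gram matrix: `T_W 𝒢_{U,W,V} T_W^* S_W⁻¹ = U`. -/
theorem stmt10 (W V : ι → Submodule ℂ H)
    [∀ i, CompleteSpace (W i)] [∀ i, CompleteSpace (V i)]
    (ω v : ι → ℝ) (hω : ∀ i, 0 < ω i) (hv : ∀ i, 0 < v i)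
    (AW BW AV BV : ℝ) (hAW : 0 < AW) (hAV : 0 < AV)
    (hframeW : IsFusionFrame W ω AW BW) (hframeV : IsFusionFrame V v AV BV)
    (U : H →L[ℂ] H)
    (TW : lp (fun i => ↥(W i)) 2 →L[ℂ] H)
    (hTW : ∀ f, HasSum (fun i => ω i • ((f i : H))) (TW f))
    (TV : lp (fun i => ↥(V i)) 2 →L[ℂ] H)
    (hTV : ∀ f, HasSum (fun i => v i • ((f i : H))) (TV f))
    (SW SWinv SV SVinv : H →L[ℂ] H)
    (hSW : ∀ f, HasSum (fun i => (ω i) ^ 2 • ((Submodule.orthogonalProjectionOnto (W i) f : H))) (SW f))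
    (hSWinv : SW.comp SWinv = 1 ∧ SWinv.comp SW = 1)
    (hSV : ∀ f, HasSum (fun i => (v i) ^ 2 • ((Submodule.orthogonalProjectionOnto (V i) f : H))) (SV f))
    (hSVinv : SV.comp SVinv = 1 ∧ SVinv.comp SV = 1)
    (φWV : lp (fun i => ↥(V i)) 2 →L[ℂ] lp (fun i => ↥(W i)) 2)
    (hφWV : ∀ f i, ((φWV f) i : H) = (Submodule.orthogonalProjectionOnto (W i) (SVinv ((f i : H))) : H))
    (φVW : lp (fun i => ↥(W i)) 2 →L[ℂ] lp (fun i => ↥(V i)) 2)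
    (hφVW : ∀ f i, ((φVW f) i : H) = (Submodule.orthogonalProjectionOnto (V i) (SWinv ((f i : H))) : H))
    (hWdualV : TW ∘L φWV ∘L (adjoint TV) = 1)
    (hVdualW : TV ∘L φVW ∘L (adjoint TW) = 1) :
    TW ∘L (φWV ∘L (adjoint TV) ∘L U ∘L TW) ∘L (adjoint TW) ∘L SWinv = U := by
  have key : TW ∘L adjoint TW = SW := by
    ext f
    simp only [ContinuousLinearMap.comp_apply]
    have hmem : Memℓp (fun i => (ω i • Submodule.orthogonalProjectionOnto (W i) f : W i)) 2 := by
      apply memℓp_gen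
      obtain ⟨s, hs, -, -⟩ := hframeW f
      apply (hs.summable).congr
      intro i
      have hn : ‖(ω i • Submodule.orthogonalProjectionOnto (W i) f : W i)‖
          = ω i * ‖(Submodule.orthogonalProjectionOnto (W i) f : H)‖ := by
        rw [norm_smul, Real.norm_eq_abs, abs_of_pos (hω i)]; rfl
      rw [ENNReal.toReal_ofNat, hn, show ((2:ℝ)) = ((2:ℕ):ℝ) by norm_num,
        Real.rpow_natCast]
      exact (mul_pow (ω i) _ 2).symm
  
    set g : lp (fun i => ↥(W i)) 2 := ⟨_, hmem⟩ with hgdef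
    have hgi : ∀ i, (g i : ↥(W i)) = ω i • Submodule.orthogonalProjectionOnto (W i) f := fun i => rfl
    have hadj : adjoint TW f = g := by
      apply ext_inner_right ℂ
      intro x
      rw [ContinuousLinearMap.adjoint_inner_left]
      have h1 : HasSum (fun i => ⟪f, ω i • ((x i : H))⟫_ℂ) ⟪f, TW x⟫_ℂ :=
        (hTW x).mapL (innerSL ℂ f)
      have h2 : HasSum (fun i => ⟪(g i : ↥(W i)), x i⟫_ℂ) ⟪g, x⟫_ℂ := lp.hasSum_inner g x
      have h3 : ∀ i, ⟪(g i : ↥(W i)), x i⟫_ℂ = ⟪f, ω i • ((x i : H))⟫_ℂ := by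
        intro i
        rw [hgi, RCLike.real_smul_eq_coe_smul (K := ℂ) (ω i),
          RCLike.real_smul_eq_coe_smul (K := ℂ) (ω i) ((x i : H)),
          inner_smul_left, inner_smul_right, RCLike.conj_ofReal,
          Submodule.inner_orthogonalProjectionOnto_eq_of_mem_right]
      refine HasSum.unique h1 ?_
      simpa only [h3] using h2
    rw [hadj]
    have h4 : (fun i => ω i • ((g i : H)))
        = fun i => (ω i) ^ 2 • ((Submodule.orthogonalProjectionOnto (W i) f : H)) := by
      funext i
      have : (g i : H) = ω i • (Submodule.orthogonalProjectionOnto (W i) f : H) := rfl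
      rw [this, smul_smul, ← pow_two]
    have h5 := hTW g
    rw [h4] at h5
    exact h5.unique (hSW f)
  have assoc : TW ∘L (φWV ∘L (adjoint TV) ∘L U ∘L TW) ∘L (adjoint TW) ∘L SWinv
      = (TW ∘L φWV ∘L (adjoint TV)) ∘L U ∘L (TW ∘L adjoint TW) ∘L SWinv := by
    simp only [ContinuousLinearMap.comp_assoc]
  rw [assoc, hWdualV, key, hSWinv.1]
  ext x
  simp [ContinuousLinearMap.one_def]
end
end

section
/- If $V$ is a dual fusion frame of $W$, then the fusion cross Gram matrix $\mathcal{G}_{V,W} = \phi_{VW}T_W^*T_V$ satisfies $\mathcal{G}_{V,W}^2 = \mathcal{G}_{V,W}$ (it is an oblique projection), and moreover $T_V\mathcal{G}_{V,W} = T_V$, $\mathcal{G}_{V,W}\phi_{VW}T_W^* = \phi_{VW}T_W^*$, and $\ker\mathcal{G}_{V,W} = \ker T_V$. -/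
open scoped InnerProductSpace
open ContinuousLinearMap (adjoint)
set_option maxHeartbeats 1000000
set_option synthInstance.maxHeartbeats 400000
noncomputable section

variable {H : Type*} [NormedAddCommGroup H] [InnerProductSpace ℂ H] [CompleteSpace H]
variable {ι : Type*} [Countable ι]

/-- if `V` is a dual fusion frame of `W`, then `𝒢_{V,W} = φ_{VW} T_W^* T_V`
is an (oblique) projection, `T_V 𝒢_{V,W} = T_V`, `𝒢_{V,W} φ_{VW} T_W^* = φ_{VW} T_W^*`,
and `ker 𝒢_{V,W} = ker T_V`. -/
theorem stmt11 (W V : ι → Submodule ℂ H)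
    [∀ i, CompleteSpace (W i)] [∀ i, CompleteSpace (V i)]
    (ω v : ι → ℝ) (hω : ∀ i, 0 < ω i) (hv : ∀ i, 0 < v i)
    (AW BW BV : ℝ) (hAW : 0 < AW)
    (hframeW : IsFusionFrame W ω AW BW) (hBesselV : IsBesselFusion V v BV)
    (TW : lp (fun i => ↥(W i)) 2 →L[ℂ] H)
    (hTW : ∀ f, HasSum (fun i => ω i • ((f i : H))) (TW f))
    (TV : lp (fun i => ↥(V i)) 2 →L[ℂ] H)
    (hTV : ∀ f, HasSum (fun i => v i • ((f i : H))) (TV f))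
    (SW SWinv : H →L[ℂ] H)
    (hSW : ∀ f, HasSum (fun i => (ω i) ^ 2 • ((Submodule.orthogonalProjectionOnto (W i) f : H))) (SW f))
    (hSWinv : SW.comp SWinv = 1 ∧ SWinv.comp SW = 1)
    (φVW : lp (fun i => ↥(W i)) 2 →L[ℂ] lp (fun i => ↥(V i)) 2)
    (hφVW : ∀ f i, ((φVW f) i : H) = (Submodule.orthogonalProjectionOnto (V i) (SWinv ((f i : H))) : H))
    (hdual : TV ∘L φVW ∘L (adjoint TW) = 1) :
    (φVW ∘L (adjoint TW) ∘L TV) ∘L (φVW ∘L (adjoint TW) ∘L TV) =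
      φVW ∘L (adjoint TW) ∘L TV ∧
    TV ∘L (φVW ∘L (adjoint TW) ∘L TV) = TV ∧
    (φVW ∘L (adjoint TW) ∘L TV) ∘L (φVW ∘L (adjoint TW)) = φVW ∘L (adjoint TW) ∧
    LinearMap.ker ((φVW ∘L (adjoint TW) ∘L TV : lp (fun i => ↥(V i)) 2 →L[ℂ] lp (fun i => ↥(V i)) 2) :
      lp (fun i => ↥(V i)) 2 →ₗ[ℂ] lp (fun i => ↥(V i)) 2) = LinearMap.ker (TV : lp (fun i => ↥(V i)) 2 →ₗ[ℂ] H) := by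
  have key : ∀ x, TV (φVW (adjoint TW x)) = x := by
    intro x
    have := congrArg (fun f => f x) hdual
    simpa using this
  refine ⟨?_, ?_, ?_, ?_⟩
  · ext x; simp [key]
  · ext x; simp [key]
  · ext x; simp [key]
  · ext x
    simp only [LinearMap.mem_ker, ContinuousLinearMap.coe_comp', Function.comp_apply,
      ContinuousLinearMap.coe_coe]
    constructor
    · intro h
      have := congrArg TV h
      simpa [key] using this
    · intro h; simp [h]
end
end

section
/- If $W=\{(W_i,\omega_i)\}_{i\in I}$ is a fusion Riesz basis, then the alternate fusion frame operator $L_W = \sum_{i\in I}\omega_i^2\pi_{W_i}S_W^{-1}\pi_{W_i}$ equals $S_{W'} = \sum_{i\in I}\pi_{W_i}$, the fusion frame operator of the 1-uniform family $W'=\{(W_i,1)\}$. -/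
open scoped InnerProductSpace
open ContinuousLinearMap (adjoint)
set_option maxHeartbeats 1000000
set_option synthInstance.maxHeartbeats 400000
open scoped ENNReal
noncomputable section

variable {H : Type*} [NormedAddCommGroup H] [InnerProductSpace ℂ H] [CompleteSpace H]
variable {ι : Type*} [Countable ι]

lemma TW_single [DecidableEq ι] (W : ι → Submodule ℂ H) [∀ i, CompleteSpace (W i)] (ω : ι → ℝ)
    (TW : lp (fun i => ↥(W i)) 2 →L[ℂ] H)
    (hTW : ∀ f, HasSum (fun i => ω i • ((f i : H))) (TW f))
    (i : ι) (v : W i) : TW (lp.single 2 i v) = ω i • (v : H) := by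
  refine (hTW _).unique ?_
  convert hasSum_ite_eq i (ω i • (v : H)) using 2 with j
  rcases eq_or_ne j i with rfl | hj
  · simp [lp.single_apply_self]
  · simp [lp.single_apply_ne _ _ _ hj, hj]

lemma TW_inj [DecidableEq ι] (W : ι → Submodule ℂ H) [∀ i, CompleteSpace (W i)] (ω : ι → ℝ)
    {C D : ℝ} (hriesz : IsFusionRieszBasisWith W ω C D)
    (TW : lp (fun i => ↥(W i)) 2 →L[ℂ] H)
    (hTW : ∀ f, HasSum (fun i => ω i • ((f i : H))) (TW f)) :
    Function.Injective TW := by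
  obtain ⟨-, hC, -, hb⟩ := hriesz
  have key : ∀ h : lp (fun i => ↥(W i)) 2, TW h = 0 → h = 0 := by
    intro h hh
    have h2 : (0:ℝ) < (2:ℝ≥0∞).toReal := by norm_num
    have hsum : HasSum (fun i : ι => lp.single 2 i (h i)) h :=
      lp.hasSum_single (by norm_num) h
    have h1 : Filter.Tendsto (fun J : Finset ι => ‖∑ j ∈ J, ω j • ((h j : H))‖ ^ 2)
        Filter.atTop (nhds 0) := by
      have ht : Filter.Tendsto (fun J : Finset ι => TW (∑ j ∈ J, lp.single 2 j (h j)))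
          Filter.atTop (nhds (TW h)) := TW.continuous.continuousAt.tendsto.comp hsum
      have heq : ∀ J : Finset ι,
          TW (∑ j ∈ J, lp.single 2 j (h j)) = ∑ j ∈ J, ω j • ((h j : H)) := by
        intro J
        rw [map_sum]
        exact Finset.sum_congr rfl fun j _ => TW_single W ω TW hTW j (h j)
      rw [hh] at ht
      have ht2 := ((continuous_pow 2).comp continuous_norm).continuousAt.tendsto.comp ht
      simp only [Function.comp, norm_zero] at ht2
      norm_num at ht2
      refine ht2.congr fun J => ?_
      simp [Function.comp, ← map_sum, heq J]
    have hns : HasSum (fun j : ι => ‖((h j : H))‖ ^ 2) (‖h‖ ^ 2) := by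
      have hn := lp.hasSum_norm h2 h
      have hc : ∀ x : ℝ, 0 ≤ x → x ^ (2:ℝ≥0∞).toReal = x ^ 2 := by
        intro x hx
        rw [show (2:ℝ≥0∞).toReal = ((2:ℕ):ℝ) by norm_num, Real.rpow_natCast]
      simpa [hc _ (norm_nonneg _)] using hn
    have htend : Filter.Tendsto (fun J : Finset ι => ∑ j ∈ J, ‖((h j : H))‖ ^ 2)
        Filter.atTop (nhds (‖h‖ ^ 2)) := hns
    have h3 : Filter.Tendsto (fun J : Finset ι => C * ∑ j ∈ J, ‖((h j : H))‖ ^ 2)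
        Filter.atTop (nhds (C * ‖h‖ ^ 2)) := htend.const_mul C
    have hfin : C * ‖h‖ ^ 2 ≤ 0 :=
      le_of_tendsto_of_tendsto' h3 h1 fun J => (hb J (fun i => h i)).1
    have hx : ‖h‖ ^ 2 ≤ 0 := by nlinarith [sq_nonneg ‖h‖]
    have : ‖h‖ = 0 := le_antisymm (by nlinarith [norm_nonneg h]) (norm_nonneg h)
    exact norm_eq_zero.mp this
  intro a b hab
  have h0 : TW (a - b) = 0 := by rw [map_sub, hab, sub_self]
  exact sub_eq_zero.mp (key _ h0)

lemma key_id [DecidableEq ι] (W : ι → Submodule ℂ H) [∀ i, CompleteSpace (W i)] (ω : ι → ℝ)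
    (hω : ∀ i, 0 < ω i) {C D : ℝ} (hriesz : IsFusionRieszBasisWith W ω C D)
    (TW : lp (fun i => ↥(W i)) 2 →L[ℂ] H)
    (hTW : ∀ f, HasSum (fun i => ω i • ((f i : H))) (TW f))
    (SW SWinv : H →L[ℂ] H)
    (hSW : ∀ f, HasSum (fun i => (ω i) ^ 2 • ((Submodule.orthogonalProjectionOnto (W i) f : H))) (SW f))
    (hinv : SW.comp SWinv = 1) (i : ι) (v : W i) :
    (ω i) ^ 2 • ((Submodule.orthogonalProjectionOnto (W i) (SWinv (v : H)) : H)) = (v : H) := by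
  set u := SWinv (v : H) with hu
  have hSWu : HasSum (fun j => (ω j) ^ 2 • ((Submodule.orthogonalProjectionOnto (W j) u : H))) (v : H) := by
    have := hSW u
    rwa [show SW u = (v : H) by
      rw [hu, ← ContinuousLinearMap.comp_apply, hinv, ContinuousLinearMap.one_apply]] at this
  -- inner products and summability
  have hproj : ∀ j, ⟪u, ((Submodule.orthogonalProjectionOnto (W j) u : H))⟫_ℂ
      = (‖((Submodule.orthogonalProjectionOnto (W j) u : H))‖ ^ 2 : ℝ) := by
    intro j
    have h0 : ⟪u - (Submodule.orthogonalProjectionOnto (W j) u : H), (Submodule.orthogonalProjectionOnto (W j) u : H)⟫_ℂ = 0 :=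
      Submodule.starProjection_inner_eq_zero (K := W j) u _ (SetLike.coe_mem _)
    calc ⟪u, ((Submodule.orthogonalProjectionOnto (W j) u : H))⟫_ℂ
        = ⟪u - (Submodule.orthogonalProjectionOnto (W j) u : H), (Submodule.orthogonalProjectionOnto (W j) u : H)⟫_ℂ
          + ⟪(Submodule.orthogonalProjectionOnto (W j) u : H), (Submodule.orthogonalProjectionOnto (W j) u : H)⟫_ℂ := by
          rw [← inner_add_left, sub_add_cancel]
      _ = (‖((Submodule.orthogonalProjectionOnto (W j) u : H))‖ ^ 2 : ℝ) := by
          rw [h0, zero_add, inner_self_eq_norm_sq_to_K]; norm_num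
  have hinner := hSWu.mapL (innerSL ℂ u)
  have hsmulC : ∀ (r : ℝ) (x : H), r • x = (r : ℂ) • x := fun r x => by
    rw [← algebraMap_smul ℂ r x]; norm_num
  have hreal : HasSum (fun j => (ω j) ^ 2 * ‖((Submodule.orthogonalProjectionOnto (W j) u : H))‖ ^ 2)
      ((⟪u, (v : H)⟫_ℂ).re) := by
    have h2 := hinner.mapL Complex.reCLM
    have heq : ∀ j, Complex.reCLM ((innerSL ℂ u) ((ω j) ^ 2 • ((Submodule.orthogonalProjectionOnto (W j) u : H))))
        = (ω j) ^ 2 * ‖((Submodule.orthogonalProjectionOnto (W j) u : H))‖ ^ 2 := by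
      intro j
      rw [innerSL_apply_apply, hsmulC, inner_smul_right, hproj j]
      simp [← Complex.ofReal_pow]
    simp only [heq] at h2
    exact h2
  set g : ∀ j, W j := fun j => ω j • (Submodule.orthogonalProjectionOnto (W j) u) with hg
  have hnorm : ∀ j, ‖g j‖ ^ (2:ℝ≥0∞).toReal
      = (ω j) ^ 2 * ‖((Submodule.orthogonalProjectionOnto (W j) u : H))‖ ^ 2 := by
    intro j
    have hn : ‖g j‖ = |ω j| * ‖((Submodule.orthogonalProjectionOnto (W j) u : H))‖ := by
      rw [hg]; rw [norm_smul]; simp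
    rw [show (2:ℝ≥0∞).toReal = ((2:ℕ):ℝ) by norm_num, Real.rpow_natCast, hn,
      abs_of_pos (hω j)]
    ring
  have hmem : Memℓp g 2 := memℓp_gen (by
    apply Summable.congr hreal.summable
    intro j
    rw [hnorm j])
  set G : lp (fun j => ↥(W j)) 2 := ⟨g, hmem⟩ with hG
  have hGcoe : ∀ j, ((G j : H)) = ω j • ((Submodule.orthogonalProjectionOnto (W j) u : H)) := by
    intro j
    simp [hG, hg]
  have hTWG : TW G = (v : H) := by
    refine (hTW G).unique ?_
    have he : ∀ j, ω j • ((G j : H)) = (ω j) ^ 2 • ((Submodule.orthogonalProjectionOnto (W j) u : H)) := by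
      intro j
      rw [hGcoe j, smul_smul, sq]
    simp only [he]
    exact hSWu
  set G2 : lp (fun j => ↥(W j)) 2 := lp.single 2 i ((ω i)⁻¹ • v) with hG2
  have hTWG2 : TW G2 = (v : H) := by
    rw [hG2, TW_single W ω TW hTW i _, Submodule.coe_smul_of_tower, smul_smul,
      mul_inv_cancel₀ (hω i).ne', one_smul]
  have hinj := TW_inj W ω hriesz TW hTW (hTWG.trans hTWG2.symm)
  have h5 : g i = (ω i)⁻¹ • v := by
    have h6 := congrFun (congrArg Subtype.val hinj) i
    simpa [hG, hG2, lp.single_apply_self] using h6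
  have h7 : ω i • ((Submodule.orthogonalProjectionOnto (W i) u : H)) = (ω i)⁻¹ • (v : H) := by
    have := congrArg (fun x : W i => (x : H)) h5
    simpa [hg, Submodule.coe_smul_of_tower] using this
  have h8 := congrArg (fun x : H => ω i • x) h7
  simpa [smul_smul, mul_inv_cancel₀ (hω i).ne', sq] using h8

/-- for a fusion Riesz basis `W`, the alternate fusion frame operator
`L_W = T_W φ_WW T_W^*` equals `S_{W'} = ∑ᵢ π_{Wᵢ}`, the frame operator of the
1-uniform family. -/
theorem stmt16 (W : ι → Submodule ℂ H) [∀ i, CompleteSpace (W i)]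
    (ω : ι → ℝ) (hω : ∀ i, 0 < ω i)
    (hriesz : IsFusionRieszBasis W ω)
    (TW : lp (fun i => ↥(W i)) 2 →L[ℂ] H)
    (hTW : ∀ f, HasSum (fun i => ω i • ((f i : H))) (TW f))
    (SW SWinv : H →L[ℂ] H)
    (hSW : ∀ f, HasSum (fun i => (ω i) ^ 2 • ((Submodule.orthogonalProjectionOnto (W i) f : H))) (SW f))
    (hSWinv : SW.comp SWinv = 1 ∧ SWinv.comp SW = 1)
    (φ : lp (fun i => ↥(W i)) 2 →L[ℂ] lp (fun i => ↥(W i)) 2)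
    (hφ : ∀ f i, ((φ f) i : H) = (Submodule.orthogonalProjectionOnto (W i) (SWinv ((f i : H))) : H)) :
    ∀ f : H, HasSum (fun i => ((Submodule.orthogonalProjectionOnto (W i) f : H)))
      ((TW ∘L φ ∘L (adjoint TW)) f) := by
  classical
  obtain ⟨C, D, hrw⟩ := hriesz
  intro f
  have hsmulC : ∀ (r : ℝ) (x : H), r • x = (r : ℂ) • x := fun r x => by
    rw [← algebraMap_smul ℂ r x]; norm_num
  have hadj : ∀ i : ι, ((adjoint TW) f) i = ω i • (Submodule.orthogonalProjectionOnto (W i) f) := by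
    intro i
    refine ext_inner_left ℂ fun v => ?_
    have h1 : ⟪lp.single 2 i v, (adjoint TW) f⟫_ℂ = ⟪v, ((adjoint TW) f) i⟫_ℂ :=
      lp.inner_single_left (𝕜 := ℂ) i v ((adjoint TW) f)
    rw [← h1, ContinuousLinearMap.adjoint_inner_right, TW_single W ω TW hTW i v]
    have h2 : ⟪(v : H), f⟫_ℂ = ⟪(v : H), (Submodule.orthogonalProjectionOnto (W i) f : H)⟫_ℂ := by
      have h3 : ⟪f - (Submodule.orthogonalProjectionOnto (W i) f : H), (v : H)⟫_ℂ = 0 :=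
          Submodule.starProjection_inner_eq_zero (K := W i) f _ (SetLike.coe_mem v)
      have h4 : ⟪(v : H), f - (Submodule.orthogonalProjectionOnto (W i) f : H)⟫_ℂ = 0 := by
        rw [← inner_conj_symm, h3, map_zero]
      rw [inner_sub_right] at h4
      exact sub_eq_zero.mp h4
    rw [Submodule.coe_inner, Submodule.coe_smul_of_tower, hsmulC, inner_smul_left, hsmulC,
      inner_smul_right, Complex.conj_ofReal, h2]
  have key : ∀ i : ι, ω i • ((φ ((adjoint TW) f)) i : H)
      = ((Submodule.orthogonalProjectionOnto (W i) f : H)) := by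
    intro i
    have e1 : ((φ ((adjoint TW) f)) i : H)
        = (Submodule.orthogonalProjectionOnto (W i) (SWinv (ω i • ((Submodule.orthogonalProjectionOnto (W i) f : H)))) : H) := by
      rw [hφ _ i, hadj i, Submodule.coe_smul_of_tower]
    have e2 : (Submodule.orthogonalProjectionOnto (W i) (SWinv (ω i • ((Submodule.orthogonalProjectionOnto (W i) f : H)))) : H)
        = ω i • ((Submodule.orthogonalProjectionOnto (W i) (SWinv ((Submodule.orthogonalProjectionOnto (W i) f : H))) : H)) := by
      rw [hsmulC, map_smul, map_smul, Submodule.coe_smul, ← hsmulC]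
    rw [e1, e2, smul_smul, ← sq]
    exact key_id W ω hω hrw TW hTW SW SWinv hSW hSWinv.1 i _
  have hs := hTW (φ ((adjoint TW) f))
  simp only [key] at hs
  exact hs
end
end

section
/- Let $V$ be a dual fusion frame of $W$ and $U\in B(\mathcal{H})$ invertible. If $\mathcal{G}_{U,V,W} = \phi_{VW}T_W^*UT_V$ is invertible, then $V$ is a fusion Riesz basis and $\mathcal{G}_{U,V,W}^{-1} = \mathcal{G}_{U^{-1},V,W}$. -/
open scoped InnerProductSpace
open ContinuousLinearMap (adjoint)
set_option maxHeartbeats 1000000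
set_option synthInstance.maxHeartbeats 400000
noncomputable section

variable {H : Type*} [NormedAddCommGroup H] [InnerProductSpace ℂ H] [CompleteSpace H]
variable {ι : Type*} [Countable ι]

/-- if `V` is a dual fusion frame of `W`, `U` invertible, and
`𝒢_{U,V,W} = φ_{VW} T_W^* U T_V` is invertible, then `V` is a fusion Riesz basis and
`𝒢_{U,V,W}⁻¹ = 𝒢_{U⁻¹,V,W}`. -/
theorem stmt18 (W V : ι → Submodule ℂ H)
    [∀ i, CompleteSpace (W i)] [∀ i, CompleteSpace (V i)]
    (ω v : ι → ℝ) (hω : ∀ i, 0 < ω i) (hv : ∀ i, 0 < v i)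
    (AW BW AV BV : ℝ) (hAW : 0 < AW) (hAV : 0 < AV)
    (hframeW : IsFusionFrame W ω AW BW) (hframeV : IsFusionFrame V v AV BV)
    (U Uinv : H →L[ℂ] H) (hU : U.comp Uinv = 1 ∧ Uinv.comp U = 1)
    (TW : lp (fun i => ↥(W i)) 2 →L[ℂ] H)
    (hTW : ∀ f, HasSum (fun i => ω i • ((f i : H))) (TW f))
    (TV : lp (fun i => ↥(V i)) 2 →L[ℂ] H)
    (hTV : ∀ f, HasSum (fun i => v i • ((f i : H))) (TV f))
    (SW SWinv : H →L[ℂ] H)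
    (hSW : ∀ f, HasSum (fun i => (ω i) ^ 2 • ((Submodule.orthogonalProjectionOnto (W i) f : H))) (SW f))
    (hSWinv : SW.comp SWinv = 1 ∧ SWinv.comp SW = 1)
    (φVW : lp (fun i => ↥(W i)) 2 →L[ℂ] lp (fun i => ↥(V i)) 2)
    (hφVW : ∀ f i, ((φVW f) i : H) = (Submodule.orthogonalProjectionOnto (V i) (SWinv ((f i : H))) : H))
    (hdual : TV ∘L φVW ∘L (adjoint TW) = 1)
    (hG : ∃ Ginv, (φVW ∘L (adjoint TW) ∘L U ∘L TV) ∘L Ginv = 1 ∧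
      Ginv ∘L (φVW ∘L (adjoint TW) ∘L U ∘L TV) = 1) :
    IsFusionRieszBasis V v ∧
    (φVW ∘L (adjoint TW) ∘L U ∘L TV) ∘L (φVW ∘L (adjoint TW) ∘L Uinv ∘L TV) = 1 ∧
    (φVW ∘L (adjoint TW) ∘L Uinv ∘L TV) ∘L (φVW ∘L (adjoint TW) ∘L U ∘L TV) = 1 := by
  
  classical
  obtain ⟨Ginv, hG1, hG2⟩ := hG
  set G : lp (fun i => ↥(V i)) 2 →L[ℂ] lp (fun i => ↥(V i)) 2 :=
    φVW ∘L (adjoint TW) ∘L U ∘L TV with hGdef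
  set G' : lp (fun i => ↥(V i)) 2 →L[ℂ] lp (fun i => ↥(V i)) 2 :=
    φVW ∘L (adjoint TW) ∘L Uinv ∘L TV with hG'def
  -- pointwise facts
  have hd : ∀ h : H, TV (φVW (adjoint TW h)) = h := by
    intro h
    have := ContinuousLinearMap.ext_iff.mp hdual h
    simpa using this
  have hUU : ∀ h : H, U (Uinv h) = h := by
    intro h
    have := ContinuousLinearMap.ext_iff.mp hU.1 h
    simpa using this
  have hGGinv : ∀ x, G (Ginv x) = x := by
    intro x
    have := ContinuousLinearMap.ext_iff.mp hG1 x
    simpa using this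
  have hGinvG : ∀ x, Ginv (G x) = x := by
    intro x
    have := ContinuousLinearMap.ext_iff.mp hG2 x
    simpa using this
  have hGG' : ∀ x, G (G' x) = φVW (adjoint TW (TV x)) := by
    intro x
    simp only [hGdef, hG'def, ContinuousLinearMap.comp_apply]
    rw [hd, hUU]
  have h3 : ∀ x, G (G' (G x)) = G x := by
    intro x
    rw [hGG']
    simp only [hGdef, ContinuousLinearMap.comp_apply]
    rw [hd]
  have hGG'1 : ∀ y, G (G' y) = y := by
    intro y
    conv_lhs => rw [← hGGinv y]
    rw [h3, hGGinv]
  have hG'G1 : ∀ x, G' (G x) = x := by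
    intro x
    calc G' (G x) = Ginv (G (G' (G x))) := (hGinvG _).symm
      _ = Ginv (G x) := by rw [h3]
      _ = x := hGinvG x
  -- density of span of the V i
  have hrange : ∀ f : lp (fun i => ↥(V i)) 2, TV f ∈ (⨆ i, V i).topologicalClosure := by
    intro f
    refine (Submodule.isClosed_topologicalClosure _).mem_of_tendsto (hTV f) ?_
    filter_upwards with J
    refine Submodule.sum_mem _ fun i _ => ?_
    refine Submodule.le_topologicalClosure _ ?_
    refine Submodule.mem_iSup_of_mem i ?_
    rw [← algebraMap_smul ℂ (v i) ((f i : H))]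
    exact Submodule.smul_mem _ _ (f i).2
  have htop : (⨆ i, V i).topologicalClosure = ⊤ := by
    rw [Submodule.eq_top_iff']
    intro h
    have := hrange (φVW (adjoint TW h))
    rwa [hd] at this
  -- lower bound for the synthesis operator
  set A0 : H →L[ℂ] lp (fun i => ↥(V i)) 2 :=
    φVW ∘L (adjoint TW) ∘L U with hA0def
  have hA0TV : ∀ f, A0 (TV f) = G f := by
    intro f
    simp [hA0def, hGdef, ContinuousLinearMap.comp_apply]
  have hlow : ∀ f, ‖f‖ ≤ (‖Ginv‖ * ‖A0‖) * ‖TV f‖ := by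
    intro f
    calc ‖f‖ = ‖Ginv (A0 (TV f))‖ := by rw [hA0TV, hGinvG]
      _ ≤ ‖Ginv‖ * ‖A0 (TV f)‖ := Ginv.le_opNorm _
      _ ≤ ‖Ginv‖ * (‖A0‖ * ‖TV f‖) :=
          mul_le_mul_of_nonneg_left (A0.le_opNorm _) (norm_nonneg Ginv)
      _ = (‖Ginv‖ * ‖A0‖) * ‖TV f‖ := by ring
  set c : ℝ := max (‖Ginv‖ * ‖A0‖) 1 with hcdef
  have hc1 : (1 : ℝ) ≤ c := le_max_right _ _
  have hc0 : (0 : ℝ) < c := lt_of_lt_of_le one_pos hc1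
  have hlow' : ∀ f, ‖f‖ ≤ c * ‖TV f‖ := fun f =>
    (hlow f).trans (mul_le_mul_of_nonneg_right (le_max_left _ _) (norm_nonneg _))
  set C : ℝ := 1 / c ^ 2 with hCdef
  set D : ℝ := max (‖TV‖ ^ 2) C with hDdef
  have hC : 0 < C := by positivity
  have hCD : C ≤ D := le_max_right _ _
  refine ⟨⟨C, D, htop, hC, hCD, ?_⟩, ?_, ?_⟩
  · intro J g
    set f : lp (fun i => ↥(V i)) 2 := ∑ j ∈ J, lp.single 2 j (g j) with hfdef
    have hfi : ∀ i, f i = if h : i ∈ J then g i else 0 := by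
      intro i
      rw [hfdef, lp.coeFn_sum, Finset.sum_apply]
      simp [lp.single_apply, Finset.sum_dite_eq]
    have hfi' : ∀ i, (f i : H) = if i ∈ J then (g i : H) else 0 := by
      intro i
      rw [hfi i]
      split <;> simp
    have hnorm : ‖f‖ ^ 2 = ∑ j ∈ J, ‖(g j : H)‖ ^ 2 := by
      have h2 : (0:ℝ) < (2 : ENNReal).toReal := by norm_num
      have hns := lp.norm_sum_single (E := fun i => ↥(V i)) h2 g J
      have h2' : (2 : ENNReal).toReal = ((2 : ℕ) : ℝ) := by norm_num
      rw [h2'] at hns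
      simp only [Real.rpow_natCast] at hns
      simpa using hns
    have hTVf : TV f = ∑ j ∈ J, v j • ((g j : H)) := by
      refine (hTV f).unique ?_
      have hz : ∀ i ∉ J, v i • (f i : H) = 0 := by
        intro i hi
        rw [hfi' i, if_neg hi, smul_zero]
      have hs := hasSum_sum_of_ne_finset_zero (L := SummationFilter.unconditional ι) hz
      have he : ∑ i ∈ J, v i • (f i : H) = ∑ j ∈ J, v j • ((g j : H)) := by
        refine Finset.sum_congr rfl fun i hi => ?_
        rw [hfi' i, if_pos hi]
      rwa [he] at hs
    constructor
    · rw [← hTVf, ← hnorm]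
      have h1 : ‖f‖ ≤ c * ‖TV f‖ := hlow' f
      have h2 : ‖f‖ ^ 2 ≤ c ^ 2 * ‖TV f‖ ^ 2 := by nlinarith [norm_nonneg f, norm_nonneg (TV f)]
      calc C * ‖f‖ ^ 2 ≤ C * (c ^ 2 * ‖TV f‖ ^ 2) := mul_le_mul_of_nonneg_left h2 hC.le
        _ = ‖TV f‖ ^ 2 := by rw [hCdef]; field_simp
    · rw [← hTVf, ← hnorm]
      calc ‖TV f‖ ^ 2 ≤ (‖TV‖ * ‖f‖) ^ 2 := by
            have := TV.le_opNorm f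
            nlinarith [norm_nonneg (TV f), norm_nonneg f, TV.opNorm_nonneg]
        _ = ‖TV‖ ^ 2 * ‖f‖ ^ 2 := by ring
        _ ≤ D * ‖f‖ ^ 2 := mul_le_mul_of_nonneg_right (le_max_left _ _) (by positivity)
  · refine ContinuousLinearMap.ext fun x => ?_
    simpa [ContinuousLinearMap.comp_apply] using hGG'1 x
  · refine ContinuousLinearMap.ext fun x => ?_
    simpa [ContinuousLinearMap.comp_apply] using hG'G1 x
end
end

section
/- Let $V$ be a dual fusion frame of $W$ in $\mathcal{H}$. Then the following are equivalent: (1) $V$ is a fusion Riesz basis; (2) $\mathcal{G}_{V,W} = \phi_{VW}T_W^*T_V$ equals the identity on $(\sum_{i\in I}\oplus V_i)_{\ell^2}$; (3) $\mathcal{G}_{V,W}$ has a left inverse. -/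
open scoped InnerProductSpace
open ContinuousLinearMap (adjoint)
set_option maxHeartbeats 1000000
set_option synthInstance.maxHeartbeats 400000
noncomputable section

variable {H : Type*} [NormedAddCommGroup H] [InnerProductSpace ℂ H] [CompleteSpace H]
variable {ι : Type*} [Countable ι]

section Aux

lemma TV_single (V : ι → Submodule ℂ H) [∀ i, CompleteSpace (V i)] [DecidableEq ι]
    (v : ι → ℝ) (TV : lp (fun i => ↥(V i)) 2 →L[ℂ] H)
    (hTV : ∀ f, HasSum (fun i => v i • ((f i : H))) (TV f))
    (j : ι) (a : V j) : TV (lp.single 2 j a) = v j • (a : H) := by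
  have h1 := hTV (lp.single 2 j a)
  have h2 : (fun i => v i • (((lp.single 2 j a : lp (fun i => ↥(V i)) 2) i : H)))
      = fun i => if i = j then v j • (a : H) else 0 := by
    funext i
    by_cases hij : i = j
    · subst hij; rw [lp.single_apply_self, if_pos rfl]
    · rw [lp.single_apply_ne (E := fun i => ↥(V i)) 2 j a hij, if_neg hij]
      simp
  rw [h2] at h1
  exact h1.unique (hasSum_ite_eq j _)

lemma TV_sum_single (V : ι → Submodule ℂ H) [∀ i, CompleteSpace (V i)] [DecidableEq ι]
    (v : ι → ℝ) (TV : lp (fun i => ↥(V i)) 2 →L[ℂ] H)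
    (hTV : ∀ f, HasSum (fun i => v i • ((f i : H))) (TV f))
    (J : Finset ι) (g : ∀ i, V i) :
    TV (∑ j ∈ J, lp.single 2 j (g j)) = ∑ j ∈ J, v j • ((g j : H)) := by
  rw [map_sum]
  exact Finset.sum_congr rfl fun j _ => TV_single V v TV hTV j (g j)

lemma norm_sum_single_sq (V : ι → Submodule ℂ H) [∀ i, CompleteSpace (V i)] [DecidableEq ι]
    (J : Finset ι) (g : ∀ i, V i) :
    ‖∑ j ∈ J, lp.single 2 j (g j)‖ ^ 2 = ∑ j ∈ J, ‖(g j : H)‖ ^ 2 := by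
  have h := lp.norm_sum_single (p := 2) (E := fun i => ↥(V i)) (by norm_num) g J
  rw [ENNReal.toReal_ofNat] at h
  have := h
  rw [Real.rpow_two] at this
  calc ‖∑ j ∈ J, lp.single 2 j (g j)‖ ^ 2 = ∑ i ∈ J, ‖g i‖ ^ (2:ℝ) := by
        rw [← this]
    _ = ∑ j ∈ J, ‖(g j : H)‖ ^ 2 := by
        refine Finset.sum_congr rfl fun j _ => ?_
        rw [Real.rpow_two]; rfl

lemma frame_dense (V : ι → Submodule ℂ H) [∀ i, CompleteSpace (V i)]
    (v : ι → ℝ) (A B : ℝ) (hA : 0 < A) (hframe : IsFusionFrame V v A B) :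
    (⨆ i, V i).topologicalClosure = ⊤ := by
  rw [Submodule.topologicalClosure_eq_top_iff, ← Submodule.iInf_orthogonal,
    Submodule.eq_bot_iff]
  intro f hf
  obtain ⟨s, hs, hAs, _⟩ := hframe f
  have hzero : ∀ i, ((Submodule.orthogonalProjectionOnto (V i) f : V i) : H) = 0 := by
    intro i
    have hfi : f ∈ (V i)ᗮ := (Submodule.mem_iInf _).mp hf i
    rw [Submodule.orthogonalProjectionOnto_eq_zero_iff.mpr hfi]
    rfl
  have hs0 : s = 0 := hs.unique (by simpa [hzero] using (hasSum_zero :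
    HasSum (fun _ : ι => (0:ℝ)) 0))
  subst hs0
  have h3 : ‖f‖ ^ 2 ≤ 0 := by nlinarith [sq_nonneg ‖f‖]
  have h4 : ‖f‖ ^ 2 = 0 := le_antisymm h3 (sq_nonneg _)
  have h5 : ‖f‖ = 0 := pow_eq_zero_iff (by norm_num : (2:ℕ) ≠ 0) |>.mp h4
  simpa using h5

lemma lower_bound_all (V : ι → Submodule ℂ H) [∀ i, CompleteSpace (V i)] [DecidableEq ι]
    (v : ι → ℝ) (TV : lp (fun i => ↥(V i)) 2 →L[ℂ] H)
    (hTV : ∀ f, HasSum (fun i => v i • ((f i : H))) (TV f)) (C : ℝ)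
    (h : ∀ (J : Finset ι) (g : ∀ i, V i),
      C * ∑ j ∈ J, ‖(g j : H)‖ ^ 2 ≤ ‖∑ j ∈ J, v j • ((g j : H))‖ ^ 2)
    (y : lp (fun i => ↥(V i)) 2) : C * ‖y‖ ^ 2 ≤ ‖TV y‖ ^ 2 := by
  have hsingle := lp.hasSum_single (E := fun i => ↥(V i)) (p := 2) (by norm_num) y
  have hnorm := lp.hasSum_norm (E := fun i => ↥(V i)) (p := 2)
    (by rw [ENNReal.toReal_ofNat]; norm_num) y
  have hnorm' : HasSum (fun i => ‖((y : ∀ i, V i) i : H)‖ ^ 2) (‖y‖ ^ 2) := by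
    have e1 : (fun i => ‖(y : ∀ i, V i) i‖ ^ ((2:ENNReal).toReal))
        = fun i => ‖((y : ∀ i, V i) i : H)‖ ^ 2 := by
      funext i; rw [ENNReal.toReal_ofNat, Real.rpow_two]; rfl
    have e2 : ‖y‖ ^ ((2:ENNReal).toReal) = ‖y‖ ^ 2 := by
      rw [ENNReal.toReal_ofNat, Real.rpow_two]
    rw [e1, e2] at hnorm
    exact hnorm
  have h1 : Filter.Tendsto (fun J : Finset ι => C * ∑ j ∈ J, ‖((y : ∀ i, V i) j : H)‖ ^ 2)
      Filter.atTop (nhds (C * ‖y‖ ^ 2)) := Filter.Tendsto.const_mul C hnorm'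
  have h2 : Filter.Tendsto
      (fun J : Finset ι => ‖TV (∑ j ∈ J, lp.single 2 j ((y : ∀ i, V i) j))‖ ^ 2)
      Filter.atTop (nhds (‖TV y‖ ^ 2)) :=
    ((TV.continuous.tendsto y).comp hsingle).norm.pow 2
  refine le_of_tendsto_of_tendsto' h1 h2 fun J => ?_
  rw [TV_sum_single V v TV hTV J (fun i => (y : ∀ i, V i) i)]
  exact h J _

end Aux

/-- if `V` is a dual fusion frame of `W`, TFAE: (1) `V` is a fusion Riesz
basis; (2) `𝒢_{V,W} = φ_{VW} T_W^* T_V` is the identity; (3) `𝒢_{V,W}` has a left inverse. -/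
theorem stmt19 (W V : ι → Submodule ℂ H)
    [∀ i, CompleteSpace (W i)] [∀ i, CompleteSpace (V i)]
    (ω v : ι → ℝ) (hω : ∀ i, 0 < ω i) (hv : ∀ i, 0 < v i)
    (AW BW AV BV : ℝ) (hAW : 0 < AW) (hAV : 0 < AV)
    (hframeW : IsFusionFrame W ω AW BW) (hframeV : IsFusionFrame V v AV BV)
    (TW : lp (fun i => ↥(W i)) 2 →L[ℂ] H)
    (hTW : ∀ f, HasSum (fun i => ω i • ((f i : H))) (TW f))
    (TV : lp (fun i => ↥(V i)) 2 →L[ℂ] H)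
    (hTV : ∀ f, HasSum (fun i => v i • ((f i : H))) (TV f))
    (SW SWinv : H →L[ℂ] H)
    (hSW : ∀ f, HasSum (fun i => (ω i) ^ 2 • ((Submodule.orthogonalProjectionOnto (W i) f : H))) (SW f))
    (hSWinv : SW.comp SWinv = 1 ∧ SWinv.comp SW = 1)
    (φVW : lp (fun i => ↥(W i)) 2 →L[ℂ] lp (fun i => ↥(V i)) 2)
    (hφVW : ∀ f i, ((φVW f) i : H) = (Submodule.orthogonalProjectionOnto (V i) (SWinv ((f i : H))) : H))
    (hdual : TV ∘L φVW ∘L (adjoint TW) = 1) :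
    (IsFusionRieszBasis V v ↔ φVW ∘L (adjoint TW) ∘L TV = 1) ∧
    ((φVW ∘L (adjoint TW) ∘L TV = 1) ↔
      ∃ L : lp (fun i => ↥(V i)) 2 →L[ℂ] lp (fun i => ↥(V i)) 2, L ∘L (φVW ∘L (adjoint TW) ∘L TV) = 1) := by
  classical
  set K : H →L[ℂ] lp (fun i => ↥(V i)) 2 := φVW ∘L (adjoint TW) with hKdef
  set G : lp (fun i => ↥(V i)) 2 →L[ℂ] lp (fun i => ↥(V i)) 2 :=
    φVW ∘L (adjoint TW) ∘L TV with hGdef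
  have hKTV : ∀ x : H, TV (K x) = x := by
    intro x
    have hx := DFunLike.congr_fun hdual x
    simpa [ContinuousLinearMap.comp_apply] using hx
  have hGK : ∀ y, G y = K (TV y) := fun y => rfl
  have hG_idem : ∀ y, G (G y) = G y := by
    intro y
    rw [hGK, hGK, hKTV]
  have hdense : (⨆ i, V i).topologicalClosure = ⊤ :=
    frame_dense V v AV BV hAV hframeV
  constructor
  · -- (1) ↔ (2)
    constructor
    · rintro ⟨C, D, _, hC, _, hRiesz⟩
      have hlow : ∀ y, C * ‖y‖ ^ 2 ≤ ‖TV y‖ ^ 2 :=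
        lower_bound_all V v TV hTV C (fun J g => (hRiesz J g).1)
      have hinj : ∀ y, TV y = 0 → y = 0 := by
        intro y hy
        have h1 := hlow y
        rw [hy] at h1
        simp only [norm_zero] at h1
        have h2 : ‖y‖ ^ 2 ≤ 0 := by nlinarith [sq_nonneg ‖y‖]
        have h3 : ‖y‖ = 0 := pow_eq_zero_iff (by norm_num : (2:ℕ) ≠ 0) |>.mp
          (le_antisymm h2 (sq_nonneg _))
        simpa using h3
      refine ContinuousLinearMap.ext fun y => ?_
      rw [ContinuousLinearMap.one_apply]
      have h4 : TV (G y - y) = 0 := by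
        rw [map_sub, hGK, hKTV, sub_self]
      have h5 := hinj _ h4
      rw [sub_eq_zero] at h5
      exact h5
    · intro h
      refine ⟨((‖K‖ + 1) ^ 2)⁻¹, ‖TV‖ ^ 2 + 1, hdense, by positivity, ?_, ?_⟩
      · have h1 : (1:ℝ) ≤ (‖K‖ + 1) ^ 2 := by nlinarith [norm_nonneg K]
        have h2 : ((‖K‖ + 1) ^ 2)⁻¹ ≤ 1 := by
          rw [inv_le_one_iff₀]; right; exact h1
        nlinarith [sq_nonneg ‖TV‖]
      · intro J g
        set y : lp (fun i => ↥(V i)) 2 := ∑ j ∈ J, lp.single 2 j (g j) with hy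
        have key1 : TV y = ∑ j ∈ J, v j • ((g j : H)) := TV_sum_single V v TV hTV J g
        have key2 : ‖y‖ ^ 2 = ∑ j ∈ J, ‖(g j : H)‖ ^ 2 := norm_sum_single_sq V J g
        have hGy : K (TV y) = y := by
          rw [← hGK y]
          simpa using DFunLike.congr_fun h y
        have hbound : ‖y‖ ≤ ‖K‖ * ‖TV y‖ := by
          calc ‖y‖ = ‖K (TV y)‖ := by rw [hGy]
            _ ≤ ‖K‖ * ‖TV y‖ := K.le_opNorm _
        constructor
        · rw [← key1, ← key2, inv_mul_le_iff₀ (by positivity)]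
          nlinarith [norm_nonneg y, norm_nonneg (TV y), norm_nonneg K,
            K.opNorm_nonneg]
        · rw [← key1, ← key2]
          have := TV.le_opNorm y
          nlinarith [norm_nonneg y, norm_nonneg (TV y), TV.opNorm_nonneg]
  · -- (2) ↔ (3)
    constructor
    · intro h
      exact ⟨1, by rw [h]; ext x; simp⟩
    · rintro ⟨L, hL⟩
      have e2 : ∀ x, L (G x) = x := by
        intro x
        have := DFunLike.congr_fun hL x
        simpa [ContinuousLinearMap.comp_apply, ← hGdef] using this
      refine ContinuousLinearMap.ext fun y => ?_
      rw [ContinuousLinearMap.one_apply]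
      calc G y = L (G (G y)) := (e2 (G y)).symm
        _ = L (G y) := by rw [hG_idem]
        _ = y := e2 y
end
end
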